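/- Assume H is strictly convex (d_k > 0 for some finite k ≥ 2). Then the set {x ∈ [0,1] : H(x) − x = 1 − 2μ¹} has at most two elements; it contains μ¹; and it contains an element strictly less than μ¹ if and only if H'(μ¹) > 1, where H'(x) = ∑_{k≥1} k d_k x^{k−1}. -/

import Mathlib

open MeasureTheory ProbabilityTheory Filter Topology

/-- The generating function `H(x) = ∑_{k≥1} d_k x^k` (we use `d : ℕ → ℝ` with `d 0 = 0`). -/
noncomputable def genFun (d : ℕ → ℝ) (x : ℝ) : ℝ := ∑' k, d k * x ^ k

/-- The derivative `H'(x) = ∑_{k≥1} k d_k x^(k-1)`. -/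
noncomputable def genFunDeriv (d : ℕ → ℝ) (x : ℝ) : ℝ :=
  ∑' k : ℕ, ((k : ℝ) + 1) * d (k + 1) * x ^ k

/-- The product `∏_{i=1}^N X_i`, where on `{N = ∞}` it is the limit (infimum) of the
nonincreasing partial products. -/
noncomputable def rdeProd {Ω : Type*} (X : ℕ → Ω → ℝ) (N : Ω → ℕ∞) (ω : Ω) : ℝ :=
  if N ω = ⊤ then ⨅ n, ∏ i ∈ Finset.range n, X i ω
  else ∏ i ∈ Finset.range (N ω).toNat, X i ω

/-- `ν` is invariant for the RDE `X = 1 - ∏_{i=1}^N X_i`: whenever `(X_i)` are i.i.d. with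
law `ν` and `N` is an independent `ℕ ∪ {∞}`-valued random variable with `P(N = k) = d_k`,
the random variable `Y = 1 - ∏_{i=1}^N X_i` again has law `ν`. -/
def IsRDEInvariant (d : ℕ → ℝ) (ν : Measure ℝ) : Prop :=
  ∀ (Ω : Type) (_ : MeasureSpace Ω) (X : ℕ → Ω → ℝ) (N : Ω → ℕ∞),
    IsProbabilityMeasure (ℙ : Measure Ω) →
    (∀ i, Measurable (X i)) → Measurable N →
    (∀ i, Measure.map (X i) ℙ = ν) →
    iIndepFun X ℙ →
    IndepFun (fun ω i => X i ω) N ℙ →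
    (∀ k : ℕ, ℙ {ω | N ω = (k : ℕ∞)} = ENNReal.ofReal (d k)) →
    Measure.map (fun ω => 1 - rdeProd X N ω) ℙ = ν

/-- The two-point measure on `{0,1} ⊆ ℝ` with mass `μ` at `1` and `1 - μ` at `0`. -/
noncomputable def bern (μ : ℝ) : Measure ℝ :=
  ENNReal.ofReal μ • Measure.dirac 1 + ENNReal.ofReal (1 - μ) • Measure.dirac 0

/-! ### Auxiliary lemmas -/

lemma summable_genFun' {d : ℕ → ℝ} (hdnn : ∀ k, 0 ≤ d k) (hdsum : Summable d)
    {x : ℝ} (hx : |x| ≤ 1) : Summable (fun k => d k * x ^ k) := by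
  refine Summable.of_norm_bounded hdsum fun k => ?_
  rw [norm_mul, norm_pow, Real.norm_eq_abs, Real.norm_eq_abs, abs_of_nonneg (hdnn k)]
  exact mul_le_of_le_one_right (hdnn k) (pow_le_one₀ (abs_nonneg x) hx)

lemma strictConvexOn_genFun' {d : ℕ → ℝ} (hdnn : ∀ k, 0 ≤ d k) (hdsum : Summable d)
    (hconv : ∃ k : ℕ, 2 ≤ k ∧ 0 < d k) :
    StrictConvexOn ℝ (Set.Icc (0:ℝ) 1) (genFun d) := by
  obtain ⟨k₀, hk₀, hdk₀⟩ := hconv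
  refine ⟨convex_Icc 0 1, fun x hx y hy hxy a b ha hb hab => ?_⟩
  simp only [smul_eq_mul]
  have hmem : a * x + b * y ∈ Set.Icc (0:ℝ) 1 :=
    (convex_Icc (0:ℝ) 1) hx hy ha.le hb.le hab
  have habs : |a * x + b * y| ≤ 1 := abs_le.mpr ⟨by linarith [hmem.1], hmem.2⟩
  have habsx : |x| ≤ 1 := abs_le.mpr ⟨by linarith [hx.1], hx.2⟩
  have habsy : |y| ≤ 1 := abs_le.mpr ⟨by linarith [hy.1], hy.2⟩
  have hterm : ∀ k : ℕ, d k * (a * x + b * y) ^ k ≤ a * (d k * x ^ k) + b * (d k * y ^ k) := by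
    intro k
    have h := (convexOn_pow (𝕜 := ℝ) k).2 hx.1 hy.1 ha.le hb.le hab
    simp only [smul_eq_mul] at h
    nlinarith [hdnn k, h]
  have hstrict : d k₀ * (a * x + b * y) ^ k₀ <
      a * (d k₀ * x ^ k₀) + b * (d k₀ * y ^ k₀) := by
    have h := (strictConvexOn_pow hk₀).2 hx.1 hy.1 hxy ha hb hab
    simp only [smul_eq_mul] at h
    nlinarith [h]
  have hsx : Summable (fun k => d k * x ^ k) := summable_genFun' hdnn hdsum habsx
  have hsy : Summable (fun k => d k * y ^ k) := summable_genFun' hdnn hdsum habsy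
  have hsum2 : Summable (fun k => a * (d k * x ^ k) + b * (d k * y ^ k)) :=
    (hsx.mul_left a).add (hsy.mul_left b)
  have hsum1 : Summable (fun k => d k * (a * x + b * y) ^ k) :=
    summable_genFun' hdnn hdsum habs
  calc genFun d (a * x + b * y) = ∑' k, d k * (a * x + b * y) ^ k := rfl
    _ < ∑' k, (a * (d k * x ^ k) + b * (d k * y ^ k)) :=
        Summable.tsum_lt_tsum hterm hstrict hsum1 hsum2
    _ = a * genFun d x + b * genFun d y := by
        rw [Summable.tsum_add (hsx.mul_left a) (hsy.mul_left b), tsum_mul_left, tsum_mul_left]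
        rfl

lemma continuousOn_genFun' {d : ℕ → ℝ} (hdnn : ∀ k, 0 ≤ d k) (hdsum : Summable d) :
    ContinuousOn (genFun d) (Set.Icc (0:ℝ) 1) := by
  refine continuousOn_tsum (fun i => (Continuous.continuousOn (by continuity))) hdsum ?_
  intro n x hx
  rw [norm_mul, norm_pow, Real.norm_eq_abs, Real.norm_eq_abs, abs_of_nonneg (hdnn n)]
  exact mul_le_of_le_one_right (hdnn n)
    (pow_le_one₀ (abs_nonneg x) (abs_le.mpr ⟨by linarith [hx.1], hx.2⟩))

lemma hasDerivAt_genFun' {d : ℕ → ℝ} (hdnn : ∀ k, 0 ≤ d k) (hdsum : Summable d)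
    (hdle : ∑' k, d k ≤ 1) {x : ℝ} (hx : x ∈ Set.Ioo (0:ℝ) 1) :
    HasDerivAt (genFun d) (genFunDeriv d x) x := by
  obtain ⟨hx0, hx1⟩ := hx
  set r : ℝ := (1 + x) / 2 with hr
  have hr0 : 0 < r := by positivity
  have hr1 : r < 1 := by simp only [hr]; linarith
  have hxr : x < r := by simp only [hr]; linarith
  have hdb : ∀ n, d n ≤ 1 := fun n =>
    le_trans (Summable.le_tsum hdsum n fun _ _ => hdnn _) hdle
  have hu : Summable (fun n : ℕ => (n : ℝ) * r ^ (n - 1)) := by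
    rw [← summable_nat_add_iff 1]
    simp only [Nat.add_sub_cancel, Nat.cast_add, Nat.cast_one]
    have h1 : Summable (fun n : ℕ => (n : ℝ) ^ 1 * r ^ n) :=
      summable_pow_mul_geometric_of_norm_lt_one 1
        (by rw [Real.norm_eq_abs, abs_of_pos hr0]; exact hr1)
    simp only [pow_one] at h1
    have h2 : Summable (fun n : ℕ => r ^ n) := summable_geometric_of_lt_one hr0.le hr1
    simpa [add_mul, one_mul] using h1.add h2
  have hbound : ∀ (n : ℕ) (y : ℝ), y ∈ Set.Ioo (-r) r →
      ‖d n * ((n : ℝ) * y ^ (n - 1))‖ ≤ (n : ℝ) * r ^ (n - 1) := by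
    intro n y hy
    have hyr : |y| ≤ r := le_of_lt (abs_lt.mpr ⟨hy.1, hy.2⟩)
    rw [norm_mul, norm_mul, norm_pow, Real.norm_eq_abs, Real.norm_eq_abs, Real.norm_eq_abs,
      abs_of_nonneg (hdnn n), Nat.abs_cast]
    calc d n * ((n : ℝ) * |y| ^ (n - 1)) ≤ 1 * ((n : ℝ) * r ^ (n - 1)) := by
          apply mul_le_mul (hdb n)
          · exact mul_le_mul_of_nonneg_left
              (pow_le_pow_left₀ (abs_nonneg y) hyr _) (Nat.cast_nonneg n)
          · positivity
          · norm_num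
      _ = (n : ℝ) * r ^ (n - 1) := one_mul _
  have key := hasDerivAt_tsum_of_isPreconnected hu (isOpen_Ioo (a := -r) (b := r))
    (convex_Ioo (-r) r).isPreconnected
    (g := fun n z => d n * z ^ n) (g' := fun n y => d n * ((n : ℝ) * y ^ (n - 1)))
    (fun n y _ => (hasDerivAt_pow n y).const_mul (d n))
    hbound
    (Set.mem_Ioo.mpr ⟨by linarith, hr0⟩)
    (by
      refine Summable.of_norm_bounded hdsum fun k => ?_
      rw [norm_mul, norm_pow, Real.norm_eq_abs, Real.norm_eq_abs, abs_of_nonneg (hdnn k)]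
      exact mul_le_of_le_one_right (hdnn k)
        (pow_le_one₀ (abs_nonneg (0:ℝ)) (by norm_num)))
    (Set.mem_Ioo.mpr ⟨by linarith, hxr⟩)
  have hval : (∑' n : ℕ, d n * ((n : ℝ) * x ^ (n - 1))) = genFunDeriv d x := by
    have hs : Summable (fun n : ℕ => d n * ((n : ℝ) * x ^ (n - 1))) :=
      Summable.of_norm_bounded hu
        (fun n => hbound n x (Set.mem_Ioo.mpr ⟨by linarith, hxr⟩))
    rw [Summable.tsum_eq_zero_add hs]
    simp only [Nat.cast_zero, zero_mul, mul_zero, zero_add, Nat.add_sub_cancel]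
    unfold genFunDeriv
    congr 1
    funext n
    push_cast
    ring
  rw [← hval]
  exact key

lemma genFun_zero {d : ℕ → ℝ} (hd0 : d 0 = 0) : genFun d 0 = 0 := by
  unfold genFun
  rw [tsum_eq_single 0]
  · simp [hd0]
  · intro k hk
    simp [zero_pow hk]

lemma genFun_one {d : ℕ → ℝ} : genFun d 1 = ∑' k, d k := by
  unfold genFun; simp

/-- if `H` is strictly convex, the set `{x ∈ [0,1] : H(x) - x = 1 - 2μ¹}` has at
most two elements, contains `μ¹`, and contains an element strictly less than `μ¹` iff
`H'(μ¹) > 1`. -/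
theorem second_moment_roots (d : ℕ → ℝ) (hd0 : d 0 = 0) (hdnn : ∀ k, 0 ≤ d k)
    (hdsum : Summable d) (hdle : ∑' k, d k ≤ 1)
    (hconv : ∃ k : ℕ, 2 ≤ k ∧ 0 < d k)
    (μ1 : ℝ) (hμ1 : μ1 ∈ Set.Ioo (0 : ℝ) 1) (hroot : genFun d μ1 + μ1 = 1) :
    ({x ∈ Set.Icc (0 : ℝ) 1 | genFun d x - x = 1 - 2 * μ1}).encard ≤ 2 ∧
    μ1 ∈ {x ∈ Set.Icc (0 : ℝ) 1 | genFun d x - x = 1 - 2 * μ1} ∧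
    ((∃ x ∈ {x ∈ Set.Icc (0 : ℝ) 1 | genFun d x - x = 1 - 2 * μ1}, x < μ1) ↔
      1 < genFunDeriv d μ1) := by
  obtain ⟨hμ0, hμlt1⟩ := hμ1
  set S := {x ∈ Set.Icc (0 : ℝ) 1 | genFun d x - x = 1 - 2 * μ1} with hS
  set f : ℝ → ℝ := fun z => genFun d z - z with hf
  have hμmem : μ1 ∈ Set.Icc (0:ℝ) 1 := ⟨hμ0.le, hμlt1.le⟩
  have hfμ : f μ1 = 1 - 2 * μ1 := by simp only [hf]; linarith
  have hgsc := strictConvexOn_genFun' hdnn hdsum hconv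
  -- strict convexity of f
  have hfsc : StrictConvexOn ℝ (Set.Icc (0:ℝ) 1) f := by
    refine ⟨convex_Icc 0 1, fun x hx y hy hxy a b ha hb hab => ?_⟩
    have h := hgsc.2 hx hy hxy ha hb hab
    simp only [smul_eq_mul, hf] at h ⊢
    nlinarith [h]
  -- derivative of f at μ1
  have hderiv : HasDerivAt f (genFunDeriv d μ1 - 1) μ1 :=
    (hasDerivAt_genFun' hdnn hdsum hdle ⟨hμ0, hμlt1⟩).sub (hasDerivAt_id μ1)
  -- midpoint lemma
  have hmid : ∀ p q r : ℝ, p ∈ Set.Icc (0:ℝ) 1 → r ∈ Set.Icc (0:ℝ) 1 →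
      p < q → q < r → f p = f r → f q < f p := by
    intro p q r hp hr hpq hqr hpr
    have hprlt : p < r := hpq.trans hqr
    set a : ℝ := (r - q) / (r - p) with ha
    set b : ℝ := (q - p) / (r - p) with hb
    have hrp : (0:ℝ) < r - p := by linarith
    have ha0 : 0 < a := div_pos (by linarith) hrp
    have hb0 : 0 < b := div_pos (by linarith) hrp
    have hab : a + b = 1 := by rw [ha, hb, ← add_div]; rw [show r - q + (q - p) = r - p by ring, div_self hrp.ne']
    have hq : a • p + b • r = q := by
      simp only [smul_eq_mul, ha, hb]
      field_simp
      ring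
    have h := hfsc.2 hp hr (ne_of_lt hprlt) ha0 hb0 hab
    rw [hq] at h
    simp only [smul_eq_mul] at h
    calc f q < a * f p + b * f r := h
      _ = f p := by rw [← hpr, ← add_mul, hab, one_mul]
  have hμS : μ1 ∈ S := ⟨hμmem, hfμ⟩
  -- membership in S means f value
  have hSval : ∀ x ∈ S, f x = 1 - 2 * μ1 := fun x hx => hx.2
  refine ⟨?_, hμS, ?_, ?_⟩
  · -- cardinality
    by_contra hcon
    rw [not_le] at hcon
    have key3 : ∀ p q r : ℝ, p ∈ S → q ∈ S → r ∈ S → p < q → q < r → False := by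
      intro p q r hp hq hr hpq hqr
      have h := hmid p q r hp.1 hr.1 hpq hqr (by rw [hSval p hp, hSval r hr])
      rw [hSval p hp, hSval q hq] at h
      exact lt_irrefl _ h
    have h1 : (1 : ℕ∞) < S.encard := lt_trans (by norm_num) hcon
    obtain ⟨a, b, haS, hbS, hab⟩ := Set.one_lt_encard_iff.mp h1
    have h2 : (S \ {a, b}).Nonempty := by
      rw [Set.nonempty_iff_ne_empty]
      intro hemp
      have hsub : S ⊆ {a, b} := by
        intro z hz
        by_contra hz2
        exact (Set.eq_empty_iff_forall_notMem.mp hemp z) ⟨hz, hz2⟩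
      have := Set.encard_le_encard hsub
      rw [Set.encard_pair hab] at this
      exact absurd this (not_le_of_gt hcon)
    obtain ⟨w, hwS, hw⟩ := h2
    simp only [Set.mem_insert_iff, Set.mem_singleton_iff, not_or] at hw
    obtain ⟨hwa, hwb⟩ := hw
    rcases lt_or_gt_of_ne hab with h1' | h1'
    · rcases lt_or_gt_of_ne hwa with h2' | h2'
      · exact key3 w a b hwS haS hbS h2' h1'
      · rcases lt_or_gt_of_ne hwb with h3' | h3'
        · exact key3 a w b haS hwS hbS h2' h3'
        · exact key3 a b w haS hbS hwS h1' h3'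
    · rcases lt_or_gt_of_ne hwb with h2' | h2'
      · exact key3 w b a hwS hbS haS h2' h1'
      · rcases lt_or_gt_of_ne hwa with h3' | h3'
        · exact key3 b w a hbS hwS haS h2' h3'
        · exact key3 b a w hbS haS hwS h1' h3'
  · rintro ⟨x, hxS, hxlt⟩
    have hs := hfsc.slope_lt_of_hasDerivAt hxS.1 hμmem hxlt hderiv
    have hslope : slope f x μ1 = 0 := by
      rw [slope_def_field, hSval x hxS, hfμ, sub_self, zero_div]
    rw [hslope] at hs
    linarith
  · intro hH
    have hc : 0 < genFunDeriv d μ1 - 1 := by linarith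
    -- find m ∈ (0, μ1) with f m < f μ1
    have hT : Tendsto (slope f μ1) (𝓝[<] μ1) (𝓝 (genFunDeriv d μ1 - 1)) :=
      (hasDerivAt_iff_tendsto_slope.mp hderiv).mono_left
        (nhdsWithin_mono μ1 (fun z hz => ne_of_lt hz))
    have hev : ∀ᶠ m in 𝓝[<] μ1, 0 < slope f μ1 m := hT.eventually (eventually_gt_nhds hc)
    have hev2 : ∀ᶠ m in 𝓝[<] μ1, m ∈ Set.Ioo (0:ℝ) μ1 :=
      Filter.eventually_mem_set.mpr (Ioo_mem_nhdsLT hμ0)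
    obtain ⟨m, hm1, hm2⟩ := (hev.and hev2).exists
    obtain ⟨hm0, hmμ⟩ := hm2
    have hfm : f m < f μ1 := by
      rw [slope_def_field] at hm1
      have hneg : m - μ1 < 0 := by linarith
      by_contra hge
      rw [not_lt] at hge
      have : (f m - f μ1) / (m - μ1) ≤ 0 := div_nonpos_of_nonneg_of_nonpos
        (by linarith) hneg.le
      linarith
    -- μ1 > 1/2
    have hμhalf : genFun d μ1 < μ1 := by
      have h := hgsc.2 (Set.left_mem_Icc.mpr (by norm_num))
        (Set.right_mem_Icc.mpr (by norm_num)) (by norm_num : (0:ℝ) ≠ 1)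
        (by linarith : (0:ℝ) < 1 - μ1) hμ0 (by ring)
      simp only [smul_eq_mul, mul_zero, mul_one, zero_add, genFun_zero hd0,
        genFun_one] at h
      nlinarith [hdle, hμ0]
    have hf0 : f 0 = 0 := by simp [hf, genFun_zero hd0]
    have hf0gt : f μ1 < f 0 := by rw [hf0, hfμ]; linarith
    -- IVT on [0, m]
    have hcont : ContinuousOn f (Set.Icc 0 m) := by
      apply ContinuousOn.sub
      · exact (continuousOn_genFun' hdnn hdsum).mono
          (Set.Icc_subset_Icc le_rfl (by linarith))
      · exact continuousOn_id
    have hIV := intermediate_value_Icc' (le_of_lt hm0) hcont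
    have hmemIV : f μ1 ∈ Set.Icc (f m) (f 0) := ⟨hfm.le, hf0gt.le⟩
    obtain ⟨x, hx, hfx⟩ := hIV hmemIV
    refine ⟨x, ⟨⟨hx.1, by linarith [hx.2, hmμ, hμlt1]⟩, ?_⟩, by linarith [hx.2, hmμ]⟩
    show genFun d x - x = 1 - 2 * μ1
    have : f x = f μ1 := hfx
    rw [hfμ] at this
    simpa [hf] using this
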